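/- Let a > r > 0 and p > 0, let α(t) = (a + r cos(t/r), r sin(t/r)) parameterize the circle of radius r centered at (a, 0), and let H̃₁(t) = p · (α(t)/|α(t)|²) · (cos(t/r), sin(t/r)). Then for any t with sin(t/r) > 0, H̃₁'(t) < 0. -/

import Mathlib

open Real

/-- For `a > r > 0` and `p > 0`, along the circle
`α(t) = (a + r cos(t/r), r sin(t/r))` the normal derivative of `log(r^p)`,
`H̃₁(t) = p (α(t)/|α(t)|²) · (cos(t/r), sin(t/r))`, has negative derivative
at every `t` with `sin(t/r) > 0`. -/
theorem stmt_8 (a r p t : ℝ) (hr : 0 < r) (har : r < a) (hp : 0 < p)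
    (hs : 0 < sin (t/r)) :
    deriv (fun u => p * ((a + r * cos (u/r)) * cos (u/r) + (r * sin (u/r)) * sin (u/r)) /
      ((a + r * cos (u/r))^2 + (r * sin (u/r))^2)) t < 0 := by
  have hrne : r ≠ 0 := hr.ne'
  have h1 : HasDerivAt (fun u : ℝ => u / r) (1 / r) t := by
    simpa using (hasDerivAt_id t).div_const r
  have hc : HasDerivAt (fun u : ℝ => cos (u / r)) (-sin (t / r) * (1 / r)) t :=
    by have := (Real.hasDerivAt_cos (t / r)).comp t h1; exact this
  have hsin : HasDerivAt (fun u : ℝ => sin (u / r)) (cos (t / r) * (1 / r)) t :=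
    by have := (Real.hasDerivAt_sin (t / r)).comp t h1; exact this
  have hA : HasDerivAt (fun u : ℝ => a + r * cos (u / r)) (r * (-sin (t / r) * (1 / r))) t :=
    (hc.const_mul r).const_add a
  have hN : HasDerivAt
      (fun u : ℝ => p * ((a + r * cos (u/r)) * cos (u/r) + (r * sin (u/r)) * sin (u/r)))
      (p * ((r * (-sin (t / r) * (1 / r)) * cos (t/r) + (a + r * cos (t/r)) * (-sin (t / r) * (1 / r))) +
        (r * (cos (t / r) * (1 / r)) * sin (t/r) + (r * sin (t/r)) * (cos (t / r) * (1 / r))))) t :=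
    ((hA.mul hc).add ((hsin.const_mul r).mul hsin)).const_mul p
  have hD : HasDerivAt
      (fun u : ℝ => (a + r * cos (u/r))^2 + (r * sin (u/r))^2)
      ((2 : ℕ) * (a + r * cos (t/r)) ^ 1 * (r * (-sin (t / r) * (1 / r))) +
        (2 : ℕ) * (r * sin (t/r)) ^ 1 * (r * (cos (t / r) * (1 / r)))) t :=
    (hA.pow 2).add ((hsin.const_mul r).pow 2)
  have hc1 : -1 ≤ cos (t/r) := neg_one_le_cos _
  have hAp : 0 < a + r * cos (t/r) := by nlinarith
  have hDpos : 0 < (a + r * cos (t/r))^2 + (r * sin (t/r))^2 :=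
    add_pos_of_pos_of_nonneg (pow_pos hAp 2) (sq_nonneg _)
  have hdiv := (hN.div hD hDpos.ne').deriv
  simp only [Pi.div_def] at hdiv
  rw [hdiv]
  apply div_neg_of_neg_of_pos
  · have pyth := sin_sq_add_cos_sq (t/r)
    have key : p * ((r * (-sin (t / r) * (1 / r)) * cos (t/r) + (a + r * cos (t/r)) * (-sin (t / r) * (1 / r))) +
        (r * (cos (t / r) * (1 / r)) * sin (t/r) + (r * sin (t/r)) * (cos (t / r) * (1 / r)))) *
        ((a + r * cos (t/r))^2 + (r * sin (t/r))^2) -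
        p * ((a + r * cos (t/r)) * cos (t/r) + (r * sin (t/r)) * sin (t/r)) *
        ((2 : ℕ) * (a + r * cos (t/r)) ^ 1 * (r * (-sin (t / r) * (1 / r))) +
        (2 : ℕ) * (r * sin (t/r)) ^ 1 * (r * (cos (t / r) * (1 / r)))) =
        p * a * sin (t/r) * (r^2 - a^2) / r := by
      field_simp
      linear_combination (r^2 * a) * pyth
    rw [key]
    apply div_neg_of_neg_of_pos _ hr
    have h3 : 0 < p * a * sin (t/r) := mul_pos (mul_pos hp (hr.trans har)) hs
    nlinarith [mul_pos h3 (show (0:ℝ) < a^2 - r^2 by nlinarith)]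
  · positivity
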